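/- Let f : [0,∞) → ℝ be convex and continuous, let f'(∞) := sup_{s>0} f'₊(s), and let β < f'(∞), κ > 0 and s₀ > 0 be given. Then there exists δ ∈ (0, 1/s₀) such that f(0) + β·s − κ < f(s) for every s ≥ 0 with s < δ, and also for every s > 1/δ. -/

import Mathlib

/-- The right derivative `f'₊(s)` of `f` at `s`. -/
noncomputable def rderiv (f : ℝ → ℝ) (s : ℝ) : ℝ := derivWithin f (Set.Ioi s) s

/-- `f'(∞) := sup_{s > 0} f'₊(s)` as an extended real number in `(−∞, ∞]`. -/
noncomputable def slopeSupE (f : ℝ → ℝ) : EReal :=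
  ⨆ u : {u : ℝ // 0 < u}, ((rderiv f u : ℝ) : EReal)

open Set in
lemma convex_hasRightDeriv (f : ℝ → ℝ) (hconv : ConvexOn ℝ (Set.Ici 0) f) {u : ℝ} (hu : 0 < u) :
    HasDerivWithinAt f (rderiv f u) (Set.Ioi u) u := by
  have hu' : u ∈ Ici (0 : ℝ) := hu.le
  have hmem : ∀ {x : ℝ}, x ∈ Ioi u → x ∈ Ici (0 : ℝ) := fun hx => (hu.trans hx).le
  have hmono : MonotoneOn (slope f u) (Ioi u) := by
    intro x hx y hy hxy
    rw [slope_def_field, slope_def_field]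
    exact hconv.secant_mono hu' (hmem hx) (hmem hy) (ne_of_gt hx) (ne_of_gt hy) hxy
  have hbdd : BddBelow (slope f u '' Ioi u) := by
    refine ⟨(f u - f (u / 2)) / (u - u / 2), ?_⟩
    rintro _ ⟨v, hv, rfl⟩
    rw [slope_def_field]
    exact hconv.slope_mono_adjacent (by positivity : (0:ℝ) ≤ u / 2) (hmem hv)
      (by linarith) hv
  have htend := hmono.tendsto_nhdsGT hbdd
  have hder : HasDerivWithinAt f (sInf (slope f u '' Ioi u)) (Ioi u) u :=
    (hasDerivWithinAt_iff_tendsto_slope' self_notMem_Ioi).2 htend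
  have heq : rderiv f u = sInf (slope f u '' Ioi u) :=
    hder.derivWithin (uniqueDiffWithinAt_Ioi u)
  rw [heq]; exact hder

/-- For `f : [0,∞) → ℝ` convex and continuous, `β < f'(∞)`, `κ > 0` and
`s₀ > 0`, there exists `δ ∈ (0, 1/s₀)` such that `f(0) + β·s − κ < f(s)` for every
`s ∈ [0, δ)` and for every `s > 1/δ`. -/
theorem exists_delta_of_slope_lt (f : ℝ → ℝ) (hconv : ConvexOn ℝ (Set.Ici 0) f)
    (hcont : ContinuousOn f (Set.Ici 0)) (β κ s₀ : ℝ)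
    (hβ : (β : EReal) < slopeSupE f) (hκ : 0 < κ) (hs₀ : 0 < s₀) :
    ∃ δ : ℝ, 0 < δ ∧ δ < 1 / s₀ ∧
      (∀ s : ℝ, 0 ≤ s → s < δ → f 0 + β * s - κ < f s) ∧
      (∀ s : ℝ, 1 / δ < s → f 0 + β * s - κ < f s) := by
  obtain ⟨u, hu⟩ := lt_iSup_iff.mp hβ
  set m := rderiv f (u : ℝ) with hm
  have hβm : β < m := by exact_mod_cast hu
  have hupos : (0:ℝ) < u := u.2
  have hder := convex_hasRightDeriv f hconv hupos
  have hlow : ∀ s : ℝ, (u:ℝ) < s → f u + m * (s - u) ≤ f s := by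
    intro s hs
    have h1 := hconv.le_slope_of_hasDerivWithinAt_Ioi hupos.le (hupos.trans hs).le hs hder
    rw [slope_def_field] at h1
    have hsu : (0:ℝ) < s - u := by linarith
    rw [le_div_iff₀ hsu] at h1
    linarith
  have hc0 : ContinuousWithinAt f (Set.Ici 0) 0 := hcont 0 Set.self_mem_Ici
  obtain ⟨δ₁, hδ₁pos, hδ₁⟩ := Metric.continuousWithinAt_iff.mp hc0 (κ/2) (by linarith)
  set C : ℝ := (f 0 - κ - f u + m * u) / (m - β) with hCdef
  set T : ℝ := max (max ((u:ℝ) + 1) (C + 1)) 1 with hTdef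
  have hT1 : (1:ℝ) ≤ T := le_max_right _ _
  have hTpos : (0:ℝ) < T := by linarith
  have hβ1 : (0:ℝ) < 2 * (|β| + 1) := by positivity
  set δ : ℝ := min (min δ₁ (κ / (2 * (|β| + 1)))) (min (1 / (2 * s₀)) (1 / T)) with hδdef
  have hδpos : 0 < δ := by
    apply lt_min (lt_min hδ₁pos (by positivity)) (lt_min (by positivity) (by positivity))
  refine ⟨δ, hδpos, ?_, ?_, ?_⟩
  · calc δ ≤ 1 / (2 * s₀) := le_trans (min_le_right _ _) (min_le_left _ _)
      _ < 1 / s₀ := by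
        apply div_lt_div_of_pos_left one_pos hs₀
        linarith
  · intro s hs0 hsδ
    have hs1 : s < δ₁ := lt_of_lt_of_le hsδ (le_trans (min_le_left _ _) (min_le_left _ _))
    have hs2 : s < κ / (2 * (|β| + 1)) :=
      lt_of_lt_of_le hsδ (le_trans (min_le_left _ _) (min_le_right _ _))
    have hfs : dist (f s) (f 0) < κ / 2 := by
      apply hδ₁ hs0
      rw [Real.dist_eq, sub_zero, abs_of_nonneg hs0]
      exact hs1
    rw [Real.dist_eq, abs_lt] at hfs
    have hβs : β * s < κ / 2 := by
      have h1 : β * s ≤ |β| * s := mul_le_mul_of_nonneg_right (le_abs_self β) hs0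
      have h2 : (|β| + 1) * s < (|β| + 1) * (κ / (2 * (|β| + 1))) := by
        apply mul_lt_mul_of_pos_left hs2 (by positivity)
      have h3 : (|β| + 1) * (κ / (2 * (|β| + 1))) = κ / 2 := by
        field_simp
      nlinarith [abs_nonneg β]
    linarith [hfs.1]
  · intro s hs
    have hδT : δ ≤ 1 / T := le_trans (min_le_right _ _) (min_le_right _ _)
    have hTs : T < s := by
      have h1 : T ≤ 1 / δ := by
        rw [le_div_iff₀ hδpos]
        calc T * δ ≤ T * (1 / T) := mul_le_mul_of_nonneg_left hδT hTpos.le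
          _ = 1 := by field_simp
      linarith
    have hus : (u:ℝ) < s := by
      have : (u:ℝ) + 1 ≤ T := le_trans (le_max_left _ _) (le_max_left _ _)
      linarith
    have hCs : C < s := by
      have : C + 1 ≤ T := le_trans (le_max_right _ _) (le_max_left _ _)
      linarith
    have hmul : (m - β) * C < (m - β) * s := mul_lt_mul_of_pos_left hCs (by linarith)
    have hCval : (m - β) * C = f 0 - κ - f u + m * u := by
      rw [hCdef, mul_div_cancel₀]
      exact ne_of_gt (by linarith)
    have := hlow s hus
    nlinarith
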